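/- The inequality Σ_{g=1}^{G} η'_g·ε̂_g/Λ'_g ≤ ζ·(1 − Σ_{g=1}^{G} f_g/Λ'_g) holds if and only if Σ_{g=1}^{G} (C'_g/Λ'_g)·(η'_g/(1 − f_g + σ/a_g)) ≤ ζ·(σ + Σ_{g=1}^{G} (C'_g/Λ'_g)·(Λ'_g − 1)). -/

import Mathlib

/-- Algebraic equivalence between the error-contraction criterion for the
two-step iteration of the Ψtc multigroup scheme and inequality (omineq2)
of the paper. -/
theorem stmt_8
    (G : ℕ) (hG : 1 ≤ G)
    (σ ζ : ℝ) (hσ : 1 ≤ σ) (hζ : 0 < ζ)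
    (a C'g η' : Fin G → ℝ)
    (ha : ∀ g, 0 < a g) (hC'g : ∀ g, 0 < C'g g) (hη' : ∀ g, 0 ≤ η' g)
    (C' : ℝ) (hC' : C' = ∑ ℓ, C'g ℓ)
    (f Λ' ε : Fin G → ℝ)
    (hf : ∀ g, f g = C'g g / (σ + C'))
    (hΛ' : ∀ g, Λ' g = η' g + 1 + σ / a g)
    (hε : ∀ g, ε g = f g / (1 - f g + σ / a g)) :
    ((∑ g, η' g * ε g / Λ' g) ≤ ζ * (1 - ∑ g, f g / Λ' g)) ↔
      ((∑ g, (C'g g / Λ' g) * (η' g / (1 - f g + σ / a g)))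
        ≤ ζ * (σ + ∑ g, (C'g g / Λ' g) * (Λ' g - 1))) := by
  have hC'pos : 0 < C' := by
    rw [hC']
    exact Finset.sum_pos (fun g _ => hC'g g) (Finset.univ_nonempty_iff.mpr
      ⟨⟨0, hG⟩⟩)
  have hS : 0 < σ + C' := by linarith
  have hΛpos : ∀ g, 0 < Λ' g := by
    intro g
    have := div_pos (by linarith : (0:ℝ) < σ) (ha g)
    rw [hΛ' g]; have := hη' g; linarith
  have hD : ∀ g, 0 < 1 - f g + σ / a g := by
    intro g
    have h1 : f g < 1 := by
      rw [hf g, div_lt_one hS]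
      have : C'g g ≤ C' := by
        rw [hC']
        exact Finset.single_le_sum (fun i _ => (hC'g i).le) (Finset.mem_univ g)
      linarith
    have := div_pos (by linarith : (0:ℝ) < σ) (ha g)
    linarith
  have key1 : (∑ g, η' g * ε g / Λ' g) * (σ + C')
      = ∑ g, (C'g g / Λ' g) * (η' g / (1 - f g + σ / a g)) := by
    rw [Finset.sum_mul]
    refine Finset.sum_congr rfl fun g _ => ?_
    rw [hε g, hf g]
    field_simp
  have key2 : ζ * (1 - ∑ g, f g / Λ' g) * (σ + C')
      = ζ * (σ + ∑ g, (C'g g / Λ' g) * (Λ' g - 1)) := by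
    have h1 : ∀ g : Fin G, f g / Λ' g * (σ + C') = C'g g / Λ' g := by
      intro g
      rw [hf g, div_right_comm, div_mul_cancel₀ _ hS.ne']
    have h2 : ∀ g : Fin G, (C'g g / Λ' g) * (Λ' g - 1) = C'g g - C'g g / Λ' g := by
      intro g
      rw [mul_sub, mul_one, div_mul_cancel₀ _ (hΛpos g).ne']
    have hsum : (∑ g, f g / Λ' g) * (σ + C') = ∑ g, C'g g / Λ' g := by
      rw [Finset.sum_mul]
      exact Finset.sum_congr rfl fun g _ => h1 g
    calc ζ * (1 - ∑ g, f g / Λ' g) * (σ + C')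
        = ζ * ((σ + C') - (∑ g, f g / Λ' g) * (σ + C')) := by ring
      _ = ζ * ((σ + C') - ∑ g, C'g g / Λ' g) := by rw [hsum]
      _ = ζ * (σ + ∑ g, (C'g g / Λ' g) * (Λ' g - 1)) := by
          rw [hC']
          congr 1
          rw [Finset.sum_congr rfl fun g _ => h2 g, Finset.sum_sub_distrib]
          ring
  rw [← mul_le_mul_iff_of_pos_right hS, key1, key2]
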